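/- Let λ be the unique positive real number satisfying 2·e^λ·(1−λ) = 2−λ. Then both first-moment integrals vanish at the point (2λ, λ): ∫_P x₁·e^{−(2λx₁+λx₂)} d(x₁,x₂) = 0 and ∫_P x₂·e^{−(2λx₁+λx₂)} d(x₁,x₂) = 0. That is, (2λ, λ) is a critical point of the function v ↦ ∫_P e^{−⟨v,x⟩} dx on the set where it is finite. -/

import Mathlib

open MeasureTheory

/-- The moment polytope `P_{-K_M}` of the blowup of `ℂ×ℙ¹` at a torus-fixed point:
`P = {(x₁,x₂) ∈ ℝ² : x₁ ≥ −1, −1 ≤ x₂ ≤ 1, x₁ + x₂ ≥ −1}`. -/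
def momentPolytope : Set (ℝ × ℝ) :=
  {p | -1 ≤ p.1 ∧ -1 ≤ p.2 ∧ p.2 ≤ 1 ∧ -1 ≤ p.1 + p.2}

open Real Set Filter intervalIntegral


lemma hasDerivAt_expc (c x : ℝ) (hc : c ≠ 0) :
    HasDerivAt (fun x => Real.exp (c * x) / c) (Real.exp (c * x)) x := by
  have h := ((hasDerivAt_id x).const_mul c).exp.div_const c
  simpa [mul_comm, hc] using h

lemma hasDerivAt_xexpc (c x : ℝ) (hc : c ≠ 0) :
    HasDerivAt (fun x => (x / c - 1 / c ^ 2) * Real.exp (c * x)) (x * Real.exp (c * x)) x := by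
  have h1 : HasDerivAt (fun x : ℝ => x / c - 1 / c ^ 2) (1 / c) x := by
    have := ((hasDerivAt_id x).div_const c).sub_const (1 / c ^ 2)
    simpa [one_div] using this
  have h2 : HasDerivAt (fun x => Real.exp (c * x)) (c * Real.exp (c * x)) x := by
    simpa [mul_comm] using ((hasDerivAt_id x).const_mul c).exp
  have := h1.fun_mul h2
  refine this.congr_deriv ?_
  field_simp
  ring

lemma int_expc (c a b : ℝ) (hc : c ≠ 0) :
    ∫ x in a..b, Real.exp (c * x) = Real.exp (c * b) / c - Real.exp (c * a) / c := by
  rw [intervalIntegral.integral_eq_sub_of_hasDerivAt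
    (fun x _ => hasDerivAt_expc c x hc)]
  exact (Real.continuous_exp.comp (continuous_const.mul continuous_id)).intervalIntegrable a b

lemma int_xexpc (c a b : ℝ) (hc : c ≠ 0) :
    ∫ x in a..b, x * Real.exp (c * x)
      = (b / c - 1 / c ^ 2) * Real.exp (c * b) - (a / c - 1 / c ^ 2) * Real.exp (c * a) := by
  rw [intervalIntegral.integral_eq_sub_of_hasDerivAt
    (fun x _ => hasDerivAt_xexpc c x hc)]
  exact (continuous_id.mul (Real.continuous_exp.comp
    (continuous_const.mul continuous_id))).intervalIntegrable a b

lemma tendsto_cmul_atTop (c : ℝ) (hc : 0 < c) :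
    Tendsto (fun x : ℝ => c * x) atTop atTop :=
  tendsto_id.const_mul_atTop hc

lemma tendsto_exp_neg_cmul (c : ℝ) (hc : 0 < c) :
    Tendsto (fun x : ℝ => Real.exp (-(c * x))) atTop (nhds 0) := by
  exact Real.tendsto_exp_neg_atTop_nhds_zero.comp (tendsto_cmul_atTop c hc)

lemma tendsto_xexp_neg (c : ℝ) (hc : 0 < c) :
    Tendsto (fun x : ℝ => x * Real.exp (-(c * x))) atTop (nhds 0) := by
  have h := Real.tendsto_pow_mul_exp_neg_atTop_nhds_zero 1
  have h3 := (h.comp (tendsto_cmul_atTop c hc)).const_mul (1 / c)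
  simp only [mul_zero] at h3
  refine h3.congr fun x => ?_
  simp only [Function.comp, pow_one]
  field_simp

lemma int_exp_Ioi (c a : ℝ) (hc : 0 < c) :
    ∫ x in Ioi a, Real.exp (-(c * x)) = Real.exp (-(c * a)) / c := by
  have hd : ∀ x ∈ Ici a, HasDerivAt (fun x => Real.exp (-c * x) / (-c))
      (Real.exp (-(c * x))) x := by
    intro x _
    have := hasDerivAt_expc (-c) x (by linarith)
    simpa [neg_mul] using this
  have hi : IntegrableOn (fun x => Real.exp (-(c * x))) (Ioi a) := by
    simpa [neg_mul] using exp_neg_integrableOn_Ioi a hc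
  have ht : Tendsto (fun x => Real.exp (-c * x) / (-c)) atTop (nhds 0) := by
    have := (tendsto_exp_neg_cmul c hc).div_const (-c)
    simp only [zero_div] at this
    refine this.congr fun x => by rw [neg_mul]
  have := MeasureTheory.integral_Ioi_of_hasDerivAt_of_tendsto' hd hi ht
  rw [this, neg_mul]
  field_simp
  ring

lemma integrableOn_xexp_Ioi (c a : ℝ) (hc : 0 < c) :
    IntegrableOn (fun x : ℝ => x * Real.exp (-(c * x))) (Ioi a) := by
  apply integrable_of_isBigO_exp_neg (half_pos hc)
  · exact (continuous_id.mul (Real.continuous_exp.comp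
      (continuous_const.mul continuous_id).neg)).continuousOn
  · rw [Asymptotics.isBigO_iff]
    use 2 / c
    filter_upwards [eventually_ge_atTop (0:ℝ)] with x hx
    have h1 : Real.exp (-(c * x)) = Real.exp (-(c / 2) * x) * Real.exp (-(c / 2) * x) := by
      rw [← Real.exp_add]; ring_nf
    have e2 : Real.exp (-(c / 2) * x) = (Real.exp (c / 2 * x))⁻¹ := by
      rw [neg_mul, Real.exp_neg]
    rw [norm_mul, Real.norm_eq_abs, Real.norm_eq_abs, Real.norm_eq_abs, h1, abs_mul,
      abs_of_nonneg hx, abs_of_pos (Real.exp_pos _), ← mul_assoc]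
    apply mul_le_mul_of_nonneg_right _ (Real.exp_pos _).le
    have key : c / 2 * x + 1 ≤ Real.exp (c / 2 * x) := Real.add_one_le_exp _
    rw [e2, mul_inv_le_iff₀' (Real.exp_pos _)]
    have h3 : (c / 2 * x + 1) * (2 / c) = x + 2 / c := by field_simp
    have h4 := mul_le_mul_of_nonneg_right key (le_of_lt (div_pos two_pos hc))
    have h5 : (0:ℝ) < 2 / c := div_pos two_pos hc
    nlinarith [Real.exp_pos (c / 2 * x)]

lemma int_xexp_Ioi (c a : ℝ) (hc : 0 < c) :
    ∫ x in Ioi a, x * Real.exp (-(c * x))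
      = (a / c + 1 / c ^ 2) * Real.exp (-(c * a)) := by
  have hd : ∀ x ∈ Ici a, HasDerivAt (fun x => (x / (-c) - 1 / (-c) ^ 2) * Real.exp (-c * x))
      (x * Real.exp (-(c * x))) x := by
    intro x _
    have := hasDerivAt_xexpc (-c) x (by linarith)
    simpa [neg_mul] using this
  have hi : IntegrableOn (fun x : ℝ => x * Real.exp (-(c * x))) (Ioi a) :=
    integrableOn_xexp_Ioi c a hc
  have ht : Tendsto (fun x => (x / (-c) - 1 / (-c) ^ 2) * Real.exp (-c * x)) atTop (nhds 0) := by
    have h1 := (tendsto_xexp_neg c hc).div_const (-c)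
    have h2 := (tendsto_exp_neg_cmul c hc).const_mul (1 / (-c) ^ 2)
    have := h1.sub h2
    simp only [zero_div, mul_zero, sub_zero] at this
    refine this.congr fun x => ?_
    rw [neg_mul]
    ring
  have := MeasureTheory.integral_Ioi_of_hasDerivAt_of_tendsto' hd hi ht
  have h2 : a / -c - 1 / (-c) ^ 2 = -(a / c + 1 / c ^ 2) := by
    rw [div_neg, neg_pow]; ring_nf
  rw [this, h2, neg_mul]; ring



def Tset : Set (ℝ × ℝ) :=
  {p : ℝ × ℝ | p.1 ∈ Set.Ico (-1:ℝ) 0 ∧ p.2 ∈ Set.Ico (-1:ℝ) (-1 - p.1)}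

lemma measP : MeasurableSet momentPolytope := by
  have : momentPolytope = {p : ℝ × ℝ | -1 ≤ p.1} ∩ ({p | -1 ≤ p.2} ∩
      ({p | p.2 ≤ 1} ∩ {p | -1 ≤ p.1 + p.2})) := rfl
  rw [this]
  exact (measurableSet_le measurable_const measurable_fst).inter
    ((measurableSet_le measurable_const measurable_snd).inter
      ((measurableSet_le measurable_snd measurable_const).inter
        (measurableSet_le measurable_const (measurable_fst.add measurable_snd))))

lemma measT : MeasurableSet Tset := by
  have : Tset = ({p : ℝ × ℝ | -1 ≤ p.1} ∩ {p | p.1 < 0}) ∩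
      ({p | -1 ≤ p.2} ∩ {p | p.2 < -1 - p.1}) := rfl
  rw [this]
  exact ((measurableSet_le measurable_const measurable_fst).inter
      (measurableSet_lt measurable_fst measurable_const)).inter
    ((measurableSet_le measurable_const measurable_snd).inter
      (measurableSet_lt measurable_snd (measurable_const.sub measurable_fst)))

lemma union_eq : (Set.Ici (-1:ℝ) ×ˢ Set.Icc (-1:ℝ) 1) = momentPolytope ∪ Tset := by
  ext p
  simp only [Set.mem_prod, Set.mem_Ici, Set.mem_Icc, Set.mem_union, momentPolytope, Tset,
    Set.mem_setOf_eq, Set.mem_Ico]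
  constructor
  · rintro ⟨h1, h2, h3⟩
    by_cases h : -1 ≤ p.1 + p.2
    · exact Or.inl ⟨h1, h2, h3, h⟩
    · exact Or.inr ⟨⟨h1, by linarith⟩, h2, by linarith⟩
  · rintro (⟨h1, h2, h3, h4⟩ | ⟨⟨h1, h2⟩, h3, h4⟩) <;>
      exact ⟨by linarith, by linarith, by linarith⟩

lemma disj : Disjoint momentPolytope Tset := by
  rw [Set.disjoint_left]
  rintro p ⟨h1, h2, h3, h4⟩ ⟨⟨h5, h6⟩, h7, h8⟩
  linarith

lemma split (g h : ℝ → ℝ) (hgc : Continuous g) (hhc : Continuous h)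
    (hgi : IntegrableOn g (Set.Ioi (-1:ℝ))) :
    ∫ p in momentPolytope, g p.1 * h p.2
      = (∫ x in Set.Ioi (-1:ℝ), g x) * (∫ y in (-1:ℝ)..1, h y)
        - ∫ x in (-1:ℝ)..0, g x * ∫ y in (-1:ℝ)..(-1 - x), h y := by
  set f : ℝ × ℝ → ℝ := fun p => g p.1 * h p.2 with hf
  have hgI : IntegrableOn g (Set.Ici (-1:ℝ)) := Iff.mpr integrableOn_Ici_iff_integrableOn_Ioi hgi
  have hhI : IntegrableOn h (Set.Icc (-1:ℝ) 1) := hhc.integrableOn_Icc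
  have hQi : IntegrableOn f (Set.Ici (-1:ℝ) ×ˢ Set.Icc (-1:ℝ) 1) := by
    rw [IntegrableOn, Measure.volume_eq_prod, ← Measure.prod_restrict]
    exact hgI.mul_prod hhI
  have hPi : IntegrableOn f momentPolytope :=
    hQi.mono_set (by rw [union_eq]; exact Set.subset_union_left)
  have hTi : IntegrableOn f Tset :=
    hQi.mono_set (by rw [union_eq]; exact Set.subset_union_right)
  -- integral over Q splits
  have hsplit : ∫ p in (Set.Ici (-1:ℝ) ×ˢ Set.Icc (-1:ℝ) 1), f p
      = (∫ p in momentPolytope, f p) + ∫ p in Tset, f p := by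
    rw [union_eq]
    exact setIntegral_union disj measT hPi hTi
  -- product integral
  have hQval : ∫ p in (Set.Ici (-1:ℝ) ×ˢ Set.Icc (-1:ℝ) 1), f p
      = (∫ x in Set.Ioi (-1:ℝ), g x) * (∫ y in (-1:ℝ)..1, h y) := by
    rw [Measure.volume_eq_prod, setIntegral_prod_mul g h, integral_Ici_eq_integral_Ioi,
      intervalIntegral.integral_of_le (by norm_num : (-1:ℝ) ≤ 1), integral_Icc_eq_integral_Ioc]
  -- Fubini for T
  have hTval : ∫ p in Tset, f p
      = ∫ x in (-1:ℝ)..0, g x * ∫ y in (-1:ℝ)..(-1 - x), h y := by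
    have hind : Integrable (Tset.indicator f) (Measure.prod volume volume) := by
      rw [← Measure.volume_eq_prod, integrable_indicator_iff measT]
      exact hTi
    rw [← MeasureTheory.integral_indicator measT, Measure.volume_eq_prod, integral_prod _ hind]
    have hpt : ∀ x : ℝ, (∫ y, Tset.indicator f (x, y))
        = (Set.Ico (-1:ℝ) 0).indicator (fun x => ∫ y in Set.Ico (-1:ℝ) (-1 - x), f (x, y)) x := by
      intro x
      by_cases hx : x ∈ Set.Ico (-1:ℝ) 0
      · rw [Set.indicator_of_mem hx]
        have : (fun y => Tset.indicator f (x, y))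
            = (Set.Ico (-1:ℝ) (-1 - x)).indicator (fun y => f (x, y)) := by
          funext y
          by_cases hy : y ∈ Set.Ico (-1:ℝ) (-1 - x)
          · rw [Set.indicator_of_mem (by exact ⟨hx, hy⟩ : (x, y) ∈ Tset),
              Set.indicator_of_mem hy]
          · rw [Set.indicator_of_notMem (fun hmem => hy hmem.2),
              Set.indicator_of_notMem hy]
        rw [this, MeasureTheory.integral_indicator measurableSet_Ico]
      · rw [Set.indicator_of_notMem hx]
        have : (fun y => Tset.indicator f (x, y)) = fun _ => (0:ℝ) := by
          funext y
          exact Set.indicator_of_notMem (fun hmem => hx hmem.1) f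
        rw [this, MeasureTheory.integral_zero]
    have hout : (∫ x, (∫ y, Tset.indicator f (x, y)))
        = ∫ x, (Set.Ico (-1:ℝ) 0).indicator
            (fun x => ∫ y in Set.Ico (-1:ℝ) (-1 - x), f (x, y)) x := by
      congr 1
      funext x
      exact hpt x
    rw [hout, MeasureTheory.integral_indicator measurableSet_Ico,
      integral_Ico_eq_integral_Ioo, ← integral_Ioc_eq_integral_Ioo,
      ← intervalIntegral.integral_of_le (by norm_num : (-1:ℝ) ≤ 0)]
    apply intervalIntegral.integral_congr
    intro x hx
    rw [Set.uIcc_of_le (by norm_num : (-1:ℝ) ≤ 0)] at hx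
    have hx0 : x ≤ 0 := hx.2
    have hle : (-1:ℝ) ≤ -1 - x := by linarith
    show (∫ y in Set.Ico (-1:ℝ) (-1 - x), f (x, y)) = g x * ∫ y in (-1:ℝ)..(-1 - x), h y
    rw [integral_Ico_eq_integral_Ioo, ← integral_Ioc_eq_integral_Ioo,
      ← intervalIntegral.integral_of_le hle, ← intervalIntegral.integral_const_mul]
  rw [hsplit] at hQval
  linarith [hQval, hTval]
/-- If `λ` is the unique positive real satisfying `2·e^λ·(1−λ) = 2−λ`, then both
first-moment integrals over `P` vanish at the point `(2λ, λ)`: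
`∫_P x₁·e^{−(2λx₁+λx₂)} = 0` and `∫_P x₂·e^{−(2λx₁+λx₂)} = 0`. -/
theorem stmt_5 (l : ℝ) (hpos : 0 < l)
    (heq : 2 * Real.exp l * (1 - l) = 2 - l) :
    (∫ p in momentPolytope, p.1 * Real.exp (-(2 * l * p.1 + l * p.2))) = 0 ∧
    (∫ p in momentPolytope, p.2 * Real.exp (-(2 * l * p.1 + l * p.2))) = 0 := by
  have hl : l ≠ 0 := hpos.ne'
  have h2l : (2*l) ≠ 0 := by positivity
  have hnl : (-l) ≠ 0 := by simpa using hl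
  have hn2l : (-(2*l)) ≠ 0 := by simpa using h2l
  have hEpos := Real.exp_pos l
  constructor
  · -- first moment in x₁
    have hcongr : ∫ p in momentPolytope, p.1 * Real.exp (-(2 * l * p.1 + l * p.2))
        = ∫ p in momentPolytope,
            (fun x => x * Real.exp (-(2*l*x))) p.1 * (fun y => Real.exp (-(l*y))) p.2 :=
      setIntegral_congr_fun measP (fun p _ => by
        simp only
        rw [neg_add, Real.exp_add]; ring)
    rw [hcongr, split (fun x => x * Real.exp (-(2*l*x))) (fun y => Real.exp (-(l*y)))
      (by fun_prop) (by fun_prop) (integrableOn_xexp_Ioi (2*l) (-1) (by positivity))]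
    have hA := int_xexp_Ioi (2*l) (-1) (by positivity)
    have hB : (∫ y in (-1:ℝ)..1, Real.exp (-(l*y)))
        = Real.exp (-(l*1)) / (-l) - Real.exp (-(l*(-1))) / (-l) := by
      simp_rw [← neg_mul]
      exact int_expc (-l) (-1) 1 hnl
    have hinner : ∀ x : ℝ, (∫ y in (-1:ℝ)..(-1-x), Real.exp (-(l*y)))
        = (Real.exp l - Real.exp l * Real.exp (l*x)) / l := by
      intro x
      simp_rw [← neg_mul]
      rw [int_expc (-l) (-1) (-1-x) hnl,
        show -l*(-1-x) = l + l*x by ring, show -l*(-1:ℝ) = l by ring, Real.exp_add]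
      field_simp
      ring
    have hC : (∫ x in (-1:ℝ)..0, (fun x => x * Real.exp (-(2*l*x))) x
          * ∫ y in (-1:ℝ)..(-1-x), (fun y => Real.exp (-(l*y))) y)
        = (Real.exp l / l) * (∫ x in (-1:ℝ)..0, x * Real.exp (-(2*l)*x))
          - (Real.exp l / l) * (∫ x in (-1:ℝ)..0, x * Real.exp (-l*x)) := by
      rw [← intervalIntegral.integral_const_mul, ← intervalIntegral.integral_const_mul,
        ← intervalIntegral.integral_sub (by apply Continuous.intervalIntegrable; fun_prop)
          (by apply Continuous.intervalIntegrable; fun_prop)]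
      apply intervalIntegral.integral_congr
      intro x _
      simp only
      rw [hinner x]
      have hw := Real.exp_ne_zero (-(l*x))
      have hu : Real.exp (-(2*l)*x) = Real.exp (-(l*x)) * Real.exp (-(l*x)) := by
        rw [← Real.exp_add]; congr 1; ring
      have hu' : Real.exp (-(2*l*x)) = Real.exp (-(l*x)) * Real.exp (-(l*x)) := by
        rw [← Real.exp_add]; congr 1; ring
      have hv : Real.exp (l*x) = (Real.exp (-(l*x)))⁻¹ := by
        rw [← Real.exp_neg, neg_neg]
      have hw' : Real.exp (-l*x) = Real.exp (-(l*x)) := by rw [neg_mul]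
      rw [hu, hu', hv, hw']
      field_simp
    rw [hA, hB, hC, int_xexpc (-(2*l)) (-1) 0 hn2l, int_xexpc (-l) (-1) 0 hnl]
    rw [show -(2*l*(-1:ℝ)) = 2*l by ring, show -(l*(1:ℝ)) = -l by ring,
      show -(l*(-1:ℝ)) = l by ring, show -(2*l)*(0:ℝ) = 0 by ring,
      show -(2*l)*(-1:ℝ) = 2*l by ring, show -l*(0:ℝ) = 0 by ring,
      show -l*(-1:ℝ) = l by ring, Real.exp_zero,
      show Real.exp (2*l) = Real.exp l * Real.exp l by rw [← Real.exp_add]; congr 1; ring,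
      Real.exp_neg]
    field_simp
    linear_combination (2 * Real.exp l) * heq
  · -- first moment in x₂
    have hcongr : ∫ p in momentPolytope, p.2 * Real.exp (-(2 * l * p.1 + l * p.2))
        = ∫ p in momentPolytope,
            (fun x => Real.exp (-(2*l*x))) p.1 * (fun y => y * Real.exp (-(l*y))) p.2 :=
      setIntegral_congr_fun measP (fun p _ => by
        simp only
        rw [neg_add, Real.exp_add]; ring)
    rw [hcongr, split (fun x => Real.exp (-(2*l*x))) (fun y => y * Real.exp (-(l*y)))
      (by fun_prop) (by fun_prop)
      (by simpa [neg_mul] using exp_neg_integrableOn_Ioi (-1:ℝ) (by positivity : (0:ℝ) < 2*l))]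
    have hA := int_exp_Ioi (2*l) (-1) (by positivity)
    have hB : (∫ y in (-1:ℝ)..1, y * Real.exp (-(l*y)))
        = (1 / (-l) - 1 / (-l) ^ 2) * Real.exp (-(l*1))
          - ((-1) / (-l) - 1 / (-l) ^ 2) * Real.exp (-(l*(-1))) := by
      simp_rw [← neg_mul]
      exact int_xexpc (-l) (-1) 1 hnl
    have hinner : ∀ x : ℝ, (∫ y in (-1:ℝ)..(-1-x), y * Real.exp (-(l*y)))
        = ((-1-x) / (-l) - 1 / (-l) ^ 2) * (Real.exp l * Real.exp (l*x))
          - ((-1) / (-l) - 1 / (-l) ^ 2) * Real.exp l := by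
      intro x
      simp_rw [← neg_mul]
      rw [int_xexpc (-l) (-1) (-1-x) hnl,
        show -l*(-1-x) = l + l*x by ring, show -l*(-1:ℝ) = l by ring, Real.exp_add]
    have hC : (∫ x in (-1:ℝ)..0, (fun x => Real.exp (-(2*l*x))) x
          * ∫ y in (-1:ℝ)..(-1-x), (fun y => y * Real.exp (-(l*y))) y)
        = (Real.exp l / l) * (∫ x in (-1:ℝ)..0, x * Real.exp (-l*x))
          + (Real.exp l * (1/l - 1/l^2)) * (∫ x in (-1:ℝ)..0, Real.exp (-l*x))
          - (Real.exp l * (1/l - 1/l^2)) * (∫ x in (-1:ℝ)..0, Real.exp (-(2*l)*x)) := by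
      rw [← intervalIntegral.integral_const_mul, ← intervalIntegral.integral_const_mul,
        ← intervalIntegral.integral_const_mul,
        ← intervalIntegral.integral_add (by apply Continuous.intervalIntegrable; fun_prop)
          (by apply Continuous.intervalIntegrable; fun_prop),
        ← intervalIntegral.integral_sub (by apply Continuous.intervalIntegrable; fun_prop)
          (by apply Continuous.intervalIntegrable; fun_prop)]
      apply intervalIntegral.integral_congr
      intro x _
      simp only
      rw [hinner x]
      have hw := Real.exp_ne_zero (-(l*x))
      have hu : Real.exp (-(2*l)*x) = Real.exp (-(l*x)) * Real.exp (-(l*x)) := by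
        rw [← Real.exp_add]; congr 1; ring
      have hu' : Real.exp (-(2*l*x)) = Real.exp (-(l*x)) * Real.exp (-(l*x)) := by
        rw [← Real.exp_add]; congr 1; ring
      have hv : Real.exp (l*x) = (Real.exp (-(l*x)))⁻¹ := by
        rw [← Real.exp_neg, neg_neg]
      have hw' : Real.exp (-l*x) = Real.exp (-(l*x)) := by rw [neg_mul]
      rw [hu, hu', hv, hw']
      field_simp
      ring
    rw [hA, hB, hC, int_xexpc (-l) (-1) 0 hnl, int_expc (-l) (-1) 0 hnl,
      int_expc (-(2*l)) (-1) 0 hn2l]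
    rw [show -(2*l*(-1:ℝ)) = 2*l by ring, show -(l*(1:ℝ)) = -l by ring,
      show -(l*(-1:ℝ)) = l by ring, show -(2*l)*(0:ℝ) = 0 by ring,
      show -(2*l)*(-1:ℝ) = 2*l by ring, show -l*(0:ℝ) = 0 by ring,
      show -l*(-1:ℝ) = l by ring, Real.exp_zero,
      show Real.exp (2*l) = Real.exp l * Real.exp l by rw [← Real.exp_add]; congr 1; ring,
      Real.exp_neg]
    field_simp
    ring
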